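/- Empirical Freedman inequality: Let (Ω, 𝔉, P) be a probability space with a filtration 𝔉_1 ⊆ 𝔉_2 ⊆ ⋯, and let X_1, …, X_T be real random variables such that each X_t is 𝔉_{t+1}-measurable, and set μ_t = E[X_t | 𝔉_t]. Assume max{X_t − μ_t, X_t} ≤ B almost surely for some constant B > 0. Then for every α ≥ 4B and every δ ∈ (0,1), with probability at least 1 − δ, Σ_{t=1}^T (μ_t − X_t) ≤ (4/α) · Σ_{t=1}^T X_t² + α · log(1/δ). -/

import Mathlib

open MeasureTheory Finset

/-- Elementary inequality: for `s ≤ 1/4`, `exp (-s - 4 s²) ≤ 1 - s`. -/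
private lemma exp_quad_key {s : ℝ} (hs : s ≤ 1/4) :
    Real.exp (-s - 4*s^2) ≤ 1 - s := by
  have h0 : (0:ℝ) < 1 + (s + 4*s^2) := by nlinarith [sq_nonneg (2*s + 1/4)]
  have h1 : 1 + (s + 4*s^2) ≤ Real.exp (s + 4*s^2) := by
    linarith [Real.add_one_le_exp (s + 4*s^2)]
  have h2 : Real.exp (-s - 4*s^2) * Real.exp (s + 4*s^2) = 1 := by
    rw [← Real.exp_add]; norm_num
  have h3 : Real.exp (-s - 4*s^2) * (1 + (s + 4*s^2)) ≤ 1 := by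
    calc Real.exp (-s - 4*s^2) * (1 + (s + 4*s^2))
        ≤ Real.exp (-s - 4*s^2) * Real.exp (s + 4*s^2) :=
          mul_le_mul_of_nonneg_left h1 (Real.exp_pos _).le
      _ = 1 := h2
  have h4 : (1:ℝ) ≤ (1 - s) * (1 + (s + 4*s^2)) := by nlinarith [sq_nonneg s]
  have := h3.trans h4
  exact le_of_mul_le_mul_right (by linarith) h0

/-- One-step supermartingale bound. -/
private lemma step_bound {Ω : Type*} {m0 : MeasurableSpace Ω} (P : Measure Ω)
    [IsProbabilityMeasure P] {m : MeasurableSpace Ω} (hm : m ≤ m0) {X : Ω → ℝ}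
    (hXsm : StronglyMeasurable[m0] X) (hX : Integrable X P)
    {B l : ℝ} (hl : 0 < l) (hlB : l * B ≤ 1/4)
    (hXB : ∀ᵐ ω ∂P, X ω ≤ B) :
    Integrable (fun ω => Real.exp (l * ((P[X|m]) ω - X ω) - 4 * l^2 * (X ω)^2)) P ∧
    ∀ᵐ ω ∂P,
      (P[fun ω => Real.exp (l * ((P[X|m]) ω - X ω) - 4 * l^2 * (X ω)^2)|m]) ω ≤ 1 := by
  have hμsm : StronglyMeasurable[m] (P[X|m]) := stronglyMeasurable_condExp
  have hμB : ∀ᵐ ω ∂P, (P[X|m]) ω ≤ B := by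
    have hmono := condExp_mono (m := m) hX (integrable_const B) hXB
    rw [condExp_const (μ := P) hm B] at hmono
    exact hmono
  -- the "empirical" factor
  set g : Ω → ℝ := fun ω => Real.exp (-(l * X ω) - 4*(l * X ω)^2) with hg
  have hg_sm : StronglyMeasurable[m0] g :=
    Real.continuous_exp.comp_stronglyMeasurable
      (((hXsm.const_mul l).neg).sub
        ((((hXsm.const_mul l).pow 2)).const_mul 4))
  have hg_bdd : ∀ ω, g ω ≤ Real.exp (1/16 : ℝ) := by
    intro ω
    apply Real.exp_le_exp.2
    nlinarith [sq_nonneg (2*(l * X ω) + 1/4)]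
  have hg_int : Integrable g P := by
    refine (integrable_const (Real.exp (1/16 : ℝ))).mono' hg_sm.aestronglyMeasurable ?_
    filter_upwards with ω
    rw [Real.norm_eq_abs, Real.abs_exp]
    exact hg_bdd ω
  have h1lX_int : Integrable (fun ω => 1 - l * X ω) P :=
    (integrable_const 1).sub (hX.const_mul l)
  have hgle : ∀ᵐ ω ∂P, g ω ≤ 1 - l * X ω := by
    filter_upwards [hXB] with ω hω
    have hs : l * X ω ≤ 1/4 := le_trans (mul_le_mul_of_nonneg_left hω hl.le) hlB
    exact exp_quad_key hs
  -- condexp of 1 - l X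
  have h4 : P[fun ω => l * X ω|m] =ᵐ[P] fun ω => l * (P[X|m]) ω := condExp_smul l X m
  have h2 : P[fun ω => 1 - l * X ω|m]
      =ᵐ[P] P[(fun _ => (1:ℝ))|m] - P[fun ω => l * X ω|m] :=
    condExp_sub (integrable_const (1:ℝ)) (hX.const_mul l) m
  have h3 : P[(fun _ => (1:ℝ))|m] = fun _ => (1:ℝ) := condExp_const (μ := P) hm (1:ℝ)
  have hc1 : P[fun ω => 1 - l * X ω|m] =ᵐ[P] fun ω => 1 - l * (P[X|m]) ω := by
    filter_upwards [h2, h4] with ω e2 e4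
    simp only [Pi.sub_apply] at e2
    rw [e2, h3, e4]
  have hgc : P[g|m] ≤ᵐ[P] fun ω => 1 - l * (P[X|m]) ω := by
    have := condExp_mono (m := m) hg_int h1lX_int hgle
    filter_upwards [this, hc1] with ω ha hb
    rw [hb] at ha; exact ha
  -- factorization
  set f : Ω → ℝ := fun ω => Real.exp (l * (P[X|m]) ω) with hf
  have hfact : (fun ω => Real.exp (l * ((P[X|m]) ω - X ω) - 4 * l^2 * (X ω)^2)) = f * g := by
    funext ω
    simp only [Pi.mul_apply, hf, hg, ← Real.exp_add]
    congr 1; ring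
  have hf_sm : StronglyMeasurable[m] f :=
    Real.continuous_exp.comp_stronglyMeasurable (hμsm.const_mul l)
  have hfg_int : Integrable (f * g) P := by
    refine (integrable_const (Real.exp (l*B) * Real.exp (1/16 : ℝ))).mono'
      (((hf_sm.mono hm).mul hg_sm).aestronglyMeasurable) ?_
    filter_upwards [hμB] with ω hω
    rw [Pi.mul_apply, Real.norm_eq_abs, abs_mul, Real.abs_exp, Real.abs_exp]
    exact mul_le_mul (Real.exp_le_exp.2 (mul_le_mul_of_nonneg_left hω hl.le))
      (hg_bdd ω) (Real.exp_pos _).le (Real.exp_pos _).le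
  have hint' : Integrable (fun ω => Real.exp (l * ((P[X|m]) ω - X ω) - 4 * l^2 * (X ω)^2)) P := by
    rw [hfact]; exact hfg_int
  refine ⟨hint', ?_⟩
  have hpull : P[f * g|m] =ᵐ[P] f * P[g|m] :=
    condExp_mul_of_stronglyMeasurable_left hf_sm hfg_int hg_int
  have hEq : P[fun ω => Real.exp (l * ((P[X|m]) ω - X ω) - 4 * l^2 * (X ω)^2)|m]
      =ᵐ[P] f * P[g|m] := by
    rw [hfact]; exact hpull
  filter_upwards [hEq, hgc] with ω h1 h2
  rw [h1, Pi.mul_apply]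
  calc f ω * (P[g|m]) ω ≤ f ω * (1 - l * (P[X|m]) ω) :=
        mul_le_mul_of_nonneg_left h2 (Real.exp_pos _).le
    _ ≤ f ω * Real.exp (-(l * (P[X|m]) ω)) := by
        apply mul_le_mul_of_nonneg_left _ (Real.exp_pos _).le
        have := Real.add_one_le_exp (-(l * (P[X|m]) ω))
        linarith
    _ = 1 := by rw [hf, ← Real.exp_add]; norm_num

theorem empirical_freedman_inequality
    {Ω : Type*} {m0 : MeasurableSpace Ω} (P : Measure Ω) [IsProbabilityMeasure P]
    (ℱ : Filtration ℕ m0) (T : ℕ) (X : ℕ → Ω → ℝ) (B : ℝ) (hB : 0 < B)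
    (hmeas : ∀ t ∈ Icc 1 T, StronglyMeasurable[ℱ (t + 1)] (X t))
    (hint : ∀ t ∈ Icc 1 T, Integrable (X t) P)
    (hbdd : ∀ t ∈ Icc 1 T, ∀ᵐ ω ∂P,
      max (X t ω - (P[X t | ℱ t]) ω) (X t ω) ≤ B)
    (α : ℝ) (hα : 4 * B ≤ α) (δ : ℝ) (hδ0 : 0 < δ) (hδ1 : δ < 1) :
    (1 : ℝ) - δ ≤
      (P {ω | ∑ t ∈ Icc 1 T, ((P[X t | ℱ t]) ω - X t ω) ≤
          (4 / α) * ∑ t ∈ Icc 1 T, (X t ω) ^ 2 + α * Real.log (1 / δ)}).toReal := by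
  classical
  have hα0 : (0:ℝ) < α := lt_of_lt_of_le (by linarith) hα
  set l : ℝ := 1/α with hl
  have hl0 : 0 < l := by positivity
  have hlB : l * B ≤ 1/4 := by
    rw [hl, div_mul_eq_mul_div, one_mul, div_le_div_iff₀ hα0 (by norm_num)]
    linarith
  set Y : ℕ → Ω → ℝ := fun t ω => l * ((P[X t | ℱ t]) ω - X t ω) - 4 * l^2 * (X t ω)^2
    with hY
  -- basic facts per t
  have hXB : ∀ t ∈ Icc 1 T, ∀ᵐ ω ∂P, X t ω ≤ B := fun t ht =>
    (hbdd t ht).mono fun ω h => le_trans (le_max_right _ _) h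
  have hXsm : ∀ t ∈ Icc 1 T, StronglyMeasurable (X t) := fun t ht =>
    (hmeas t ht).mono (ℱ.le (t+1))
  have hstep := fun t (ht : t ∈ Icc 1 T) =>
    step_bound P (ℱ.le t) (hXsm t ht) (hint t ht) hl0 hlB (hXB t ht)
  have hμB : ∀ t ∈ Icc 1 T, ∀ᵐ ω ∂P, (P[X t | ℱ t]) ω ≤ B := by
    intro t ht
    have hmono := condExp_mono (m := ℱ t) (hint t ht) (integrable_const B) (hXB t ht)
    rw [condExp_const (μ := P) (ℱ.le t) B] at hmono
    exact hmono
  have hYle : ∀ t ∈ Icc 1 T, ∀ᵐ ω ∂P, Y t ω ≤ l * B + 1/16 := by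
    intro t ht
    filter_upwards [hμB t ht] with ω hω
    have h1 : l * (P[X t | ℱ t]) ω ≤ l * B := mul_le_mul_of_nonneg_left hω hl0.le
    have h2 : -(l * X t ω) - 4 * (l * X t ω)^2 ≤ 1/16 := by
      nlinarith [sq_nonneg (2*(l * X t ω) + 1/4)]
    simp only [hY]
    nlinarith [sq_nonneg (l * X t ω)]
  -- measurability of partial sums
  have hS_sm : ∀ n, n ≤ T → StronglyMeasurable[ℱ (n+1)] (fun ω => ∑ t ∈ Icc 1 n, Y t ω) := by
    intro n hn
    apply Finset.stronglyMeasurable_fun_sum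
    intro t ht
    rw [Finset.mem_Icc] at ht
    have htT : t ∈ Icc 1 T := Finset.mem_Icc.2 ⟨ht.1, le_trans ht.2 hn⟩
    have hX1 : StronglyMeasurable[ℱ (n+1)] (X t) :=
      (hmeas t htT).mono (ℱ.mono (by omega))
    have hμ1 : StronglyMeasurable[ℱ (n+1)] (P[X t | ℱ t]) :=
      (stronglyMeasurable_condExp (m := ℱ t)).mono (ℱ.mono (by omega))
    exact (((hμ1.sub hX1).const_mul l).sub (((hX1.pow 2)).const_mul (4 * l^2)))
  have hS_int : ∀ n, n ≤ T → Integrable (fun ω => Real.exp (∑ t ∈ Icc 1 n, Y t ω)) P := by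
    intro n hn
    have hbd : ∀ᵐ ω ∂P, ∑ t ∈ Icc 1 n, Y t ω ≤ (n:ℝ) * (l * B + 1/16) := by
      have hall : ∀ᵐ ω ∂P, ∀ t ∈ Icc 1 n, Y t ω ≤ l * B + 1/16 := by
        rw [Filter.eventually_all_finset]
        intro t ht
        rw [Finset.mem_Icc] at ht
        exact hYle t (Finset.mem_Icc.2 ⟨ht.1, le_trans ht.2 hn⟩)
      filter_upwards [hall] with ω hω
      calc ∑ t ∈ Icc 1 n, Y t ω ≤ ∑ t ∈ Icc 1 n, (l * B + 1/16) :=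
            Finset.sum_le_sum hω
        _ ≤ (n:ℝ) * (l * B + 1/16) := by
            rw [Finset.sum_const]
            have : (Icc 1 n).card ≤ n := by
              rw [Nat.card_Icc]; omega
            have hpos : (0:ℝ) ≤ l * B + 1/16 := by positivity
            rw [nsmul_eq_mul]
            exact mul_le_mul_of_nonneg_right (by exact_mod_cast this) hpos
    refine (integrable_const (Real.exp ((n:ℝ) * (l * B + 1/16)))).mono'
      (Real.continuous_exp.comp_stronglyMeasurable
        ((hS_sm n hn).mono (ℱ.le _))).aestronglyMeasurable ?_
    filter_upwards [hbd] with ω hω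
    rw [Real.norm_eq_abs, Real.abs_exp]
    exact Real.exp_le_exp.2 hω
  -- supermartingale property of the exponential process
  have main : ∀ n, n ≤ T → ∫ ω, Real.exp (∑ t ∈ Icc 1 n, Y t ω) ∂P ≤ 1 := by
    intro n
    induction n with
    | zero =>
      intro _
      simp
    | succ n ih =>
      intro hn1
      have hn : n ≤ T := by omega
      have hsum : ∀ ω, ∑ t ∈ Icc 1 (n+1), Y t ω = (∑ t ∈ Icc 1 n, Y t ω) + Y (n+1) ω := by
        intro ω
        exact Finset.sum_Icc_succ_top (by omega) _
      have htmem : n + 1 ∈ Icc 1 T := Finset.mem_Icc.2 ⟨by omega, hn1⟩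
      set f : Ω → ℝ := fun ω => Real.exp (∑ t ∈ Icc 1 n, Y t ω) with hfdef
      set g : Ω → ℝ := fun ω => Real.exp (Y (n+1) ω) with hgdef
      have hf_sm : StronglyMeasurable[ℱ (n+1)] f :=
        Real.continuous_exp.comp_stronglyMeasurable (hS_sm n hn)
      have hfg : (fun ω => Real.exp (∑ t ∈ Icc 1 (n+1), Y t ω)) = f * g := by
        funext ω
        simp only [Pi.mul_apply, hfdef, hgdef, ← Real.exp_add, hsum ω]
      have hfg_int : Integrable (f * g) P := by rw [← hfg]; exact hS_int (n+1) hn1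
      have hg_int : Integrable g P := (hstep (n+1) htmem).1
      have hg_cond : ∀ᵐ ω ∂P, (P[g|ℱ (n+1)]) ω ≤ 1 := (hstep (n+1) htmem).2
      have hpull : P[f * g|ℱ (n+1)] =ᵐ[P] f * P[g|ℱ (n+1)] :=
        condExp_mul_of_stronglyMeasurable_left hf_sm hfg_int hg_int
      calc ∫ ω, Real.exp (∑ t ∈ Icc 1 (n+1), Y t ω) ∂P
          = ∫ ω, (f * g) ω ∂P := by rw [hfg]
        _ = ∫ ω, (P[f * g|ℱ (n+1)]) ω ∂P := (integral_condExp (ℱ.le (n+1))).symm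
        _ = ∫ ω, f ω * (P[g|ℱ (n+1)]) ω ∂P := by
            refine integral_congr_ae ?_
            filter_upwards [hpull] with ω h
            rw [h, Pi.mul_apply]
        _ ≤ ∫ ω, f ω ∂P := by
            refine integral_mono_ae ?_ (hS_int n hn) ?_
            · refine (integrable_condExp (m := ℱ (n+1)) (f := f * g)).congr ?_
              filter_upwards [hpull] with ω h
              rw [h, Pi.mul_apply]
            · filter_upwards [hg_cond] with ω h
              calc f ω * (P[g|ℱ (n+1)]) ω ≤ f ω * 1 :=
                    mul_le_mul_of_nonneg_left h (Real.exp_pos _).le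
                _ = f ω := mul_one _
        _ ≤ 1 := ih hn
  -- Markov's inequality
  set A : Set Ω := {ω | 1/δ ≤ Real.exp (∑ t ∈ Icc 1 T, Y t ω)} with hA
  have hA_meas : MeasurableSet A := by
    have : Measurable (fun ω => Real.exp (∑ t ∈ Icc 1 T, Y t ω)) :=
      (Real.continuous_exp.comp_stronglyMeasurable
        ((hS_sm T le_rfl).mono (ℱ.le _))).measurable
    exact measurableSet_le measurable_const this
  have hmarkov : (1/δ) * (P A).toReal ≤ 1 := by
    have h := mul_meas_ge_le_integral_of_nonneg
      (ae_of_all P (fun ω => (Real.exp_pos (∑ t ∈ Icc 1 T, Y t ω)).le))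
      (hS_int T le_rfl) (1/δ)
    exact h.trans (main T le_rfl)
  have hPA : (P A).toReal ≤ δ := by
    calc (P A).toReal = δ * (1/δ * (P A).toReal) := by field_simp
      _ ≤ δ * 1 := mul_le_mul_of_nonneg_left hmarkov hδ0.le
      _ = δ := mul_one δ
  -- set inclusion
  have hsub : Aᶜ ⊆ {ω | ∑ t ∈ Icc 1 T, ((P[X t | ℱ t]) ω - X t ω) ≤
      (4 / α) * ∑ t ∈ Icc 1 T, (X t ω) ^ 2 + α * Real.log (1 / δ)} := by
    intro ω hω
    simp only [hA, Set.mem_compl_iff, Set.mem_setOf_eq, not_le] at hω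
    have hlogw : ∑ t ∈ Icc 1 T, Y t ω < Real.log (1/δ) :=
      (Real.lt_log_iff_exp_lt (by positivity)).2 hω
    have hsum : ∑ t ∈ Icc 1 T, Y t ω
        = l * (∑ t ∈ Icc 1 T, ((P[X t | ℱ t]) ω - X t ω))
          - 4 * l^2 * (∑ t ∈ Icc 1 T, (X t ω)^2) := by
      rw [Finset.mul_sum, Finset.mul_sum, ← Finset.sum_sub_distrib]
    rw [hsum] at hlogw
    simp only [Set.mem_setOf_eq]
    have e3 : 4 / α = 4 * l := by rw [hl]; ring
    have hmul := mul_le_mul_of_nonneg_left hlogw.le hα0.le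
    have expand : α * (l * (∑ t ∈ Icc 1 T, ((P[X t | ℱ t]) ω - X t ω))
          - 4 * l^2 * (∑ t ∈ Icc 1 T, (X t ω)^2))
        = (∑ t ∈ Icc 1 T, ((P[X t | ℱ t]) ω - X t ω))
          - 4 * l * (∑ t ∈ Icc 1 T, (X t ω)^2) := by
      rw [hl]; field_simp
    rw [expand] at hmul
    rw [e3]
    linarith
  -- conclusion
  have h6 : P Aᶜ ≤ P {ω | ∑ t ∈ Icc 1 T, ((P[X t | ℱ t]) ω - X t ω) ≤
      (4 / α) * ∑ t ∈ Icc 1 T, (X t ω) ^ 2 + α * Real.log (1 / δ)} := measure_mono hsub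
  have h7 : (P Aᶜ).toReal ≤ (P {ω | ∑ t ∈ Icc 1 T, ((P[X t | ℱ t]) ω - X t ω) ≤
      (4 / α) * ∑ t ∈ Icc 1 T, (X t ω) ^ 2 + α * Real.log (1 / δ)}).toReal :=
    ENNReal.toReal_mono (measure_ne_top P _) h6
  have h8 : (P Aᶜ).toReal = 1 - (P A).toReal := by
    rw [prob_compl_eq_one_sub hA_meas,
      ENNReal.toReal_sub_of_le prob_le_one ENNReal.one_ne_top, ENNReal.toReal_one]
  linarith
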